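/- Let L be any fragment of CTL(Prop) and let 𝒫, 𝒩 be finite sets of actionless Kripke structures over Prop. If there is a (𝒫,𝒩)-separating L-formula, then there is one of size at most 2^n, where n := Σ_{K ∈ 𝒫∪𝒩} |Q_K|. -/

import Mathlib

open scoped Classical

/-- Formulas of computation tree logic `CTL(Prop)`:
`φ ::= p | ¬φ | φ∨φ | φ∧φ | 𝒬Xφ | 𝒬Fφ | 𝒬Gφ | 𝒬(φUφ)` with `𝒬 ∈ {∃, ∀}`.
The path quantifier is encoded as a `Bool` (`true` for `∃`, `false` for `∀`). -/
inductive CTL (P : Type) : Type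
  | atom : P → CTL P
  | not : CTL P → CTL P
  | or : CTL P → CTL P → CTL P
  | and : CTL P → CTL P → CTL P
  | qnext : Bool → CTL P → CTL P
  | qfut : Bool → CTL P → CTL P
  | qglob : Bool → CTL P → CTL P
  | quntil : Bool → CTL P → CTL P → CTL P

/-- An actionless Kripke structure over `Prop`: a finite non-empty set of states,
initial states, a transition function and a labelling by propositions. -/
structure AKripke (P : Type) where
  Q : Type
  [finQ : Fintype Q]
  neQ : Nonempty Q
  I : Set Q
  δ : Q → Set Q
  π : Q → Set P

attribute [instance] AKripke.finQ

/-- Quantification (`∃` for `b = true`, `∀` for `b = false`) over the infinite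
paths of `K` starting at `q`. -/
def QPath {P : Type} (K : AKripke P) (b : Bool) (q : K.Q)
    (Pred : (ℕ → K.Q) → Prop) : Prop :=
  if b then ∃ ρ : ℕ → K.Q, ρ 0 = q ∧ (∀ i, ρ (i + 1) ∈ K.δ (ρ i)) ∧ Pred ρ
  else ∀ ρ : ℕ → K.Q, ρ 0 = q → (∀ i, ρ (i + 1) ∈ K.δ (ρ i)) → Pred ρ

/-- Satisfaction of a `CTL` formula at a state of an actionless Kripke structure. -/
def CTLsat {P : Type} (K : AKripke P) : CTL P → K.Q → Prop
  | .atom p, q => p ∈ K.π q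
  | .not φ, q => ¬ CTLsat K φ q
  | .or φ ψ, q => CTLsat K φ q ∨ CTLsat K ψ q
  | .and φ ψ, q => CTLsat K φ q ∧ CTLsat K ψ q
  | .qnext b φ, q => QPath K b q (fun ρ => CTLsat K φ (ρ 1))
  | .qfut b φ, q => QPath K b q (fun ρ => ∃ i, CTLsat K φ (ρ i))
  | .qglob b φ, q => QPath K b q (fun ρ => ∀ i, CTLsat K φ (ρ i))
  | .quntil b φ ψ, q =>
      QPath K b q (fun ρ => ∃ i, CTLsat K ψ (ρ i) ∧ ∀ j < i, CTLsat K φ (ρ j))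

/-- `K ⊨ φ`: every initial state satisfies `φ`. -/
def CTLsatK {P : Type} (K : AKripke P) (φ : CTL P) : Prop :=
  ∀ q ∈ K.I, CTLsat K φ q

/-- A fragment of `CTL(Prop)`: a subset of its operators (atomic propositions,
`¬`, `∨`, `∧`, and for each temporal operator the set of allowed path
quantifiers). -/
structure CTLFragment (P : Type) where
  atoms : Set P
  hasNot : Prop
  hasOr : Prop
  hasAnd : Prop
  nextQ : Set Bool
  futQ : Set Bool
  globQ : Set Bool
  untilQ : Set Bool

/-- A formula belongs to the fragment if it is built using only its operators. -/
def CTLFragment.Mem {P : Type} (F : CTLFragment P) : CTL P → Prop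
  | .atom p => p ∈ F.atoms
  | .not φ => F.hasNot ∧ F.Mem φ
  | .or φ ψ => F.hasOr ∧ F.Mem φ ∧ F.Mem ψ
  | .and φ ψ => F.hasAnd ∧ F.Mem φ ∧ F.Mem ψ
  | .qnext b φ => b ∈ F.nextQ ∧ F.Mem φ
  | .qfut b φ => b ∈ F.futQ ∧ F.Mem φ
  | .qglob b φ => b ∈ F.globQ ∧ F.Mem φ
  | .quntil b φ ψ => b ∈ F.untilQ ∧ F.Mem φ ∧ F.Mem ψ

/-- The set of subformulas of a `CTL` formula. -/
def CTLSub {P : Type} : CTL P → Set (CTL P)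
  | .atom p => {.atom p}
  | .not φ => insert (.not φ) (CTLSub φ)
  | .or φ ψ => insert (.or φ ψ) (CTLSub φ ∪ CTLSub ψ)
  | .and φ ψ => insert (.and φ ψ) (CTLSub φ ∪ CTLSub ψ)
  | .qnext b φ => insert (.qnext b φ) (CTLSub φ)
  | .qfut b φ => insert (.qfut b φ) (CTLSub φ)
  | .qglob b φ => insert (.qglob b φ) (CTLSub φ)
  | .quntil b φ ψ => insert (.quntil b φ ψ) (CTLSub φ ∪ CTLSub ψ)

/-- The (syntax-DAG) size of a `CTL` formula: its number of distinct subformulas. -/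
noncomputable def CTLsz {P : Type} (φ : CTL P) : ℕ := (CTLSub φ).ncard

namespace CTLAux

variable {P : Type}

/-- Structural size. -/
def ssize : CTL P → ℕ
  | .atom _ => 1
  | .not φ => ssize φ + 1
  | .or φ ψ => ssize φ + ssize ψ + 1
  | .and φ ψ => ssize φ + ssize ψ + 1
  | .qnext _ φ => ssize φ + 1
  | .qfut _ φ => ssize φ + 1
  | .qglob _ φ => ssize φ + 1
  | .quntil _ φ ψ => ssize φ + ssize ψ + 1

theorem self_mem_sub (χ : CTL P) : χ ∈ CTLSub χ := by
  cases χ <;> simp [CTLSub]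

theorem mem_sub_size {σ χ : CTL P} (h : σ ∈ CTLSub χ) : σ = χ ∨ ssize σ < ssize χ := by
  induction χ with
  | atom p => simp [CTLSub] at h; left; exact h
  | not φ ih =>
    simp [CTLSub] at h
    rcases h with h | h
    · left; exact h
    · right; rcases ih h with rfl | h' <;> simp [ssize] <;> omega
  | or φ ψ ih1 ih2 =>
    simp [CTLSub] at h
    rcases h with h | h | h
    · left; exact h
    · right; rcases ih1 h with rfl | h' <;> simp [ssize] <;> omega
    · right; rcases ih2 h with rfl | h' <;> simp [ssize] <;> omega
  | and φ ψ ih1 ih2 =>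
    simp [CTLSub] at h
    rcases h with h | h | h
    · left; exact h
    · right; rcases ih1 h with rfl | h' <;> simp [ssize] <;> omega
    · right; rcases ih2 h with rfl | h' <;> simp [ssize] <;> omega
  | qnext b φ ih =>
    simp [CTLSub] at h
    rcases h with h | h
    · left; exact h
    · right; rcases ih h with rfl | h' <;> simp [ssize] <;> omega
  | qfut b φ ih =>
    simp [CTLSub] at h
    rcases h with h | h
    · left; exact h
    · right; rcases ih h with rfl | h' <;> simp [ssize] <;> omega
  | qglob b φ ih =>
    simp [CTLSub] at h
    rcases h with h | h
    · left; exact h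
    · right; rcases ih h with rfl | h' <;> simp [ssize] <;> omega
  | quntil b φ ψ ih1 ih2 =>
    simp [CTLSub] at h
    rcases h with h | h | h
    · left; exact h
    · right; rcases ih1 h with rfl | h' <;> simp [ssize] <;> omega
    · right; rcases ih2 h with rfl | h' <;> simp [ssize] <;> omega

theorem sub_trans {σ τ χ : CTL P} (h1 : σ ∈ CTLSub τ) (h2 : τ ∈ CTLSub χ) :
    σ ∈ CTLSub χ := by
  induction χ with
  | atom p => simp [CTLSub] at h2 ⊢; subst h2; simpa [CTLSub] using h1
  | not φ ih =>
    simp [CTLSub] at h2 ⊢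
    rcases h2 with rfl | h2
    · simpa [CTLSub] using h1
    · right; exact ih h2
  | or φ ψ ih1 ih2 =>
    simp [CTLSub] at h2 ⊢
    rcases h2 with rfl | h2 | h2
    · simpa [CTLSub] using h1
    · right; left; exact ih1 h2
    · right; right; exact ih2 h2
  | and φ ψ ih1 ih2 =>
    simp [CTLSub] at h2 ⊢
    rcases h2 with rfl | h2 | h2
    · simpa [CTLSub] using h1
    · right; left; exact ih1 h2
    · right; right; exact ih2 h2
  | qnext b φ ih =>
    simp [CTLSub] at h2 ⊢
    rcases h2 with rfl | h2
    · simpa [CTLSub] using h1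
    · right; exact ih h2
  | qfut b φ ih =>
    simp [CTLSub] at h2 ⊢
    rcases h2 with rfl | h2
    · simpa [CTLSub] using h1
    · right; exact ih h2
  | qglob b φ ih =>
    simp [CTLSub] at h2 ⊢
    rcases h2 with rfl | h2
    · simpa [CTLSub] using h1
    · right; exact ih h2
  | quntil b φ ψ ih1 ih2 =>
    simp [CTLSub] at h2 ⊢
    rcases h2 with rfl | h2 | h2
    · simpa [CTLSub] using h1
    · right; left; exact ih1 h2
    · right; right; exact ih2 h2

theorem sub_finite (χ : CTL P) : (CTLSub χ).Finite := by
  induction χ with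
  | atom p => simp [CTLSub]
  | not φ ih => exact (ih.insert _)
  | or φ ψ ih1 ih2 => exact ((ih1.union ih2).insert _)
  | and φ ψ ih1 ih2 => exact ((ih1.union ih2).insert _)
  | qnext b φ ih => exact (ih.insert _)
  | qfut b φ ih => exact (ih.insert _)
  | qglob b φ ih => exact (ih.insert _)
  | quntil b φ ψ ih1 ih2 => exact ((ih1.union ih2).insert _)

theorem mem_of_sub {F : CTLFragment P} {χ σ : CTL P} (hF : F.Mem χ) (h : σ ∈ CTLSub χ) :
    F.Mem σ := by
  induction χ with
  | atom p => simp [CTLSub] at h; subst h; exact hF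
  | not φ ih =>
    simp [CTLSub] at h
    rcases h with rfl | h
    · exact hF
    · exact ih hF.2 h
  | or φ ψ ih1 ih2 =>
    simp [CTLSub] at h
    rcases h with rfl | h | h
    · exact hF
    · exact ih1 hF.2.1 h
    · exact ih2 hF.2.2 h
  | and φ ψ ih1 ih2 =>
    simp [CTLSub] at h
    rcases h with rfl | h | h
    · exact hF
    · exact ih1 hF.2.1 h
    · exact ih2 hF.2.2 h
  | qnext b φ ih =>
    simp [CTLSub] at h
    rcases h with rfl | h
    · exact hF
    · exact ih hF.2 h
  | qfut b φ ih =>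
    simp [CTLSub] at h
    rcases h with rfl | h
    · exact hF
    · exact ih hF.2 h
  | qglob b φ ih =>
    simp [CTLSub] at h
    rcases h with rfl | h
    · exact hF
    · exact ih hF.2 h
  | quntil b φ ψ ih1 ih2 =>
    simp [CTLSub] at h
    rcases h with rfl | h | h
    · exact hF
    · exact ih1 hF.2.1 h
    · exact ih2 hF.2.2 h

/-- Substitute `a` for (every occurrence of) `b`. -/
noncomputable def subst (a b : CTL P) : CTL P → CTL P
  | .atom p => if CTL.atom p = b then a else .atom p
  | .not φ => if CTL.not φ = b then a else .not (subst a b φ)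
  | .or φ ψ => if CTL.or φ ψ = b then a else .or (subst a b φ) (subst a b ψ)
  | .and φ ψ => if CTL.and φ ψ = b then a else .and (subst a b φ) (subst a b ψ)
  | .qnext q φ => if CTL.qnext q φ = b then a else .qnext q (subst a b φ)
  | .qfut q φ => if CTL.qfut q φ = b then a else .qfut q (subst a b φ)
  | .qglob q φ => if CTL.qglob q φ = b then a else .qglob q (subst a b φ)
  | .quntil q φ ψ => if CTL.quntil q φ ψ = b then a else .quntil q (subst a b φ) (subst a b ψ)

theorem subst_of_not_mem {a b χ : CTL P} (h : b ∉ CTLSub χ) : subst a b χ = χ := by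
  induction χ with
  | atom p =>
    simp [CTLSub] at h
    simp [subst, Ne.symm h]
  | not φ ih =>
    simp [CTLSub] at h
    simp [subst, Ne.symm h.1, ih h.2]
  | or φ ψ ih1 ih2 =>
    simp [CTLSub] at h
    simp [subst, Ne.symm h.1, ih1 h.2.1, ih2 h.2.2]
  | and φ ψ ih1 ih2 =>
    simp [CTLSub] at h
    simp [subst, Ne.symm h.1, ih1 h.2.1, ih2 h.2.2]
  | qnext q φ ih =>
    simp [CTLSub] at h
    simp [subst, Ne.symm h.1, ih h.2]
  | qfut q φ ih =>
    simp [CTLSub] at h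
    simp [subst, Ne.symm h.1, ih h.2]
  | qglob q φ ih =>
    simp [CTLSub] at h
    simp [subst, Ne.symm h.1, ih h.2]
  | quntil q φ ψ ih1 ih2 =>
    simp [CTLSub] at h
    simp [subst, Ne.symm h.1, ih1 h.2.1, ih2 h.2.2]

theorem sat_subst {K : AKripke P} {a b : CTL P} (hab : CTLsat K a = CTLsat K b)
    (χ : CTL P) : CTLsat K (subst a b χ) = CTLsat K χ := by
  induction χ with
  | atom p =>
    by_cases h : CTL.atom p = b
    · subst h; simp [subst, hab]
    · simp [subst, h]
  | not φ ih =>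
    by_cases h : CTL.not φ = b
    · subst h; simp [subst, hab]
    · funext q; simp only [subst, h, if_false, CTLsat, ih]
  | or φ ψ ih1 ih2 =>
    by_cases h : CTL.or φ ψ = b
    · subst h; simp [subst, hab]
    · funext q; simp only [subst, h, if_false, CTLsat, ih1, ih2]
  | and φ ψ ih1 ih2 =>
    by_cases h : CTL.and φ ψ = b
    · subst h; simp [subst, hab]
    · funext q; simp only [subst, h, if_false, CTLsat, ih1, ih2]
  | qnext q0 φ ih =>
    by_cases h : CTL.qnext q0 φ = b
    · subst h; simp [subst, hab]
    · funext q; simp only [subst, h, if_false, CTLsat, ih]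
  | qfut q0 φ ih =>
    by_cases h : CTL.qfut q0 φ = b
    · subst h; simp [subst, hab]
    · funext q; simp only [subst, h, if_false, CTLsat, ih]
  | qglob q0 φ ih =>
    by_cases h : CTL.qglob q0 φ = b
    · subst h; simp [subst, hab]
    · funext q; simp only [subst, h, if_false, CTLsat, ih]
  | quntil q0 φ ψ ih1 ih2 =>
    by_cases h : CTL.quntil q0 φ ψ = b
    · subst h; simp [subst, hab]
    · funext q; simp only [subst, h, if_false, CTLsat, ih1, ih2]

theorem mem_subst {F : CTLFragment P} {a b : CTL P} (ha : F.Mem a) {χ : CTL P}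
    (hχ : F.Mem χ) : F.Mem (subst a b χ) := by
  induction χ with
  | atom p =>
    by_cases h : CTL.atom p = b <;> simp [subst, h] <;> first | exact ha | exact hχ
  | not φ ih =>
    by_cases h : CTL.not φ = b
    · simpa [subst, h] using ha
    · simp only [subst, h, if_false]
      exact ⟨hχ.1, ih hχ.2⟩
  | or φ ψ ih1 ih2 =>
    by_cases h : CTL.or φ ψ = b
    · simpa [subst, h] using ha
    · simp only [subst, h, if_false]
      exact ⟨hχ.1, ih1 hχ.2.1, ih2 hχ.2.2⟩
  | and φ ψ ih1 ih2 =>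
    by_cases h : CTL.and φ ψ = b
    · simpa [subst, h] using ha
    · simp only [subst, h, if_false]
      exact ⟨hχ.1, ih1 hχ.2.1, ih2 hχ.2.2⟩
  | qnext q φ ih =>
    by_cases h : CTL.qnext q φ = b
    · simpa [subst, h] using ha
    · simp only [subst, h, if_false]
      exact ⟨hχ.1, ih hχ.2⟩
  | qfut q φ ih =>
    by_cases h : CTL.qfut q φ = b
    · simpa [subst, h] using ha
    · simp only [subst, h, if_false]
      exact ⟨hχ.1, ih hχ.2⟩
  | qglob q φ ih =>
    by_cases h : CTL.qglob q φ = b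
    · simpa [subst, h] using ha
    · simp only [subst, h, if_false]
      exact ⟨hχ.1, ih hχ.2⟩
  | quntil q φ ψ ih1 ih2 =>
    by_cases h : CTL.quntil q φ ψ = b
    · simpa [subst, h] using ha
    · simp only [subst, h, if_false]
      exact ⟨hχ.1, ih1 hχ.2.1, ih2 hχ.2.2⟩

theorem sub_subst (a b : CTL P) (χ : CTL P) :
    CTLSub (subst a b χ) ⊆ subst a b '' CTLSub χ ∪ CTLSub a := by
  induction χ with
  | atom p =>
    by_cases h : CTL.atom p = b
    · simp only [subst, h, if_true]; exact Set.subset_union_right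
    · simp only [subst, h, if_false]
      intro σ hσ
      simp [CTLSub] at hσ
      subst hσ
      exact Or.inl ⟨.atom p, self_mem_sub _, by simp [subst, h]⟩
  | not φ ih =>
    by_cases h : CTL.not φ = b
    · simp only [subst, h, if_true]; exact Set.subset_union_right
    · simp only [subst, h, if_false]
      intro σ hσ
      simp only [CTLSub, Set.mem_insert_iff] at hσ
      rcases hσ with rfl | hσ
      · exact Or.inl ⟨.not φ, self_mem_sub _, by simp [subst, h]⟩
      · rcases ih hσ with ⟨τ, hτ, rfl⟩ | h'
        · exact Or.inl ⟨τ, by simp [CTLSub]; right; exact hτ, rfl⟩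
        · exact Or.inr h'
  | or φ ψ ih1 ih2 =>
    by_cases h : CTL.or φ ψ = b
    · simp only [subst, h, if_true]; exact Set.subset_union_right
    · simp only [subst, h, if_false]
      intro σ hσ
      simp only [CTLSub, Set.mem_insert_iff, Set.mem_union] at hσ
      rcases hσ with rfl | hσ | hσ
      · exact Or.inl ⟨.or φ ψ, self_mem_sub _, by simp [subst, h]⟩
      · rcases ih1 hσ with ⟨τ, hτ, rfl⟩ | h'
        · exact Or.inl ⟨τ, by simp [CTLSub]; right; left; exact hτ, rfl⟩
        · exact Or.inr h'
      · rcases ih2 hσ with ⟨τ, hτ, rfl⟩ | h'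
        · exact Or.inl ⟨τ, by simp [CTLSub]; right; right; exact hτ, rfl⟩
        · exact Or.inr h'
  | and φ ψ ih1 ih2 =>
    by_cases h : CTL.and φ ψ = b
    · simp only [subst, h, if_true]; exact Set.subset_union_right
    · simp only [subst, h, if_false]
      intro σ hσ
      simp only [CTLSub, Set.mem_insert_iff, Set.mem_union] at hσ
      rcases hσ with rfl | hσ | hσ
      · exact Or.inl ⟨.and φ ψ, self_mem_sub _, by simp [subst, h]⟩
      · rcases ih1 hσ with ⟨τ, hτ, rfl⟩ | h'
        · exact Or.inl ⟨τ, by simp [CTLSub]; right; left; exact hτ, rfl⟩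
        · exact Or.inr h'
      · rcases ih2 hσ with ⟨τ, hτ, rfl⟩ | h'
        · exact Or.inl ⟨τ, by simp [CTLSub]; right; right; exact hτ, rfl⟩
        · exact Or.inr h'
  | qnext q φ ih =>
    by_cases h : CTL.qnext q φ = b
    · simp only [subst, h, if_true]; exact Set.subset_union_right
    · simp only [subst, h, if_false]
      intro σ hσ
      simp only [CTLSub, Set.mem_insert_iff] at hσ
      rcases hσ with rfl | hσ
      · exact Or.inl ⟨.qnext q φ, self_mem_sub _, by simp [subst, h]⟩
      · rcases ih hσ with ⟨τ, hτ, rfl⟩ | h'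
        · exact Or.inl ⟨τ, by simp [CTLSub]; right; exact hτ, rfl⟩
        · exact Or.inr h'
  | qfut q φ ih =>
    by_cases h : CTL.qfut q φ = b
    · simp only [subst, h, if_true]; exact Set.subset_union_right
    · simp only [subst, h, if_false]
      intro σ hσ
      simp only [CTLSub, Set.mem_insert_iff] at hσ
      rcases hσ with rfl | hσ
      · exact Or.inl ⟨.qfut q φ, self_mem_sub _, by simp [subst, h]⟩
      · rcases ih hσ with ⟨τ, hτ, rfl⟩ | h'
        · exact Or.inl ⟨τ, by simp [CTLSub]; right; exact hτ, rfl⟩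
        · exact Or.inr h'
  | qglob q φ ih =>
    by_cases h : CTL.qglob q φ = b
    · simp only [subst, h, if_true]; exact Set.subset_union_right
    · simp only [subst, h, if_false]
      intro σ hσ
      simp only [CTLSub, Set.mem_insert_iff] at hσ
      rcases hσ with rfl | hσ
      · exact Or.inl ⟨.qglob q φ, self_mem_sub _, by simp [subst, h]⟩
      · rcases ih hσ with ⟨τ, hτ, rfl⟩ | h'
        · exact Or.inl ⟨τ, by simp [CTLSub]; right; exact hτ, rfl⟩
        · exact Or.inr h'
  | quntil q φ ψ ih1 ih2 =>
    by_cases h : CTL.quntil q φ ψ = b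
    · simp only [subst, h, if_true]; exact Set.subset_union_right
    · simp only [subst, h, if_false]
      intro σ hσ
      simp only [CTLSub, Set.mem_insert_iff, Set.mem_union] at hσ
      rcases hσ with rfl | hσ | hσ
      · exact Or.inl ⟨.quntil q φ ψ, self_mem_sub _, by simp [subst, h]⟩
      · rcases ih1 hσ with ⟨τ, hτ, rfl⟩ | h'
        · exact Or.inl ⟨τ, by simp [CTLSub]; right; left; exact hτ, rfl⟩
        · exact Or.inr h'
      · rcases ih2 hσ with ⟨τ, hτ, rfl⟩ | h'
        · exact Or.inl ⟨τ, by simp [CTLSub]; right; right; exact hτ, rfl⟩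
        · exact Or.inr h'

end CTLAux
namespace CTLAux

theorem subst_self (a b : CTL P) : subst a b b = a := by
  cases b <;> simp [subst]

theorem card_fun_prop (α : Type) [Fintype α] :
    Nat.card (α → Prop) = 2 ^ Fintype.card α := by
  rw [Nat.card_fun]
  have h2 : Nat.card Prop = 2 := by
    rw [Nat.card_congr Equiv.propEquivBool, Nat.card_eq_fintype_card, Fintype.card_bool]
  rw [h2, Nat.card_eq_fintype_card]

end CTLAux
/-- **Corollary.** For any fragment of `CTL(Prop)` and any sample `(Pos, Neg)` of
actionless Kripke structures: if some fragment formula separates the sample, then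
one of size at most `2^n` does, where `n` is the total number of states of the
sample. -/
theorem ctl_separating_size (P : Type) [Finite P] (hP : Nonempty P)
    (F : CTLFragment P) (Pos Neg : Finset (AKripke P)) :
    (∃ φ : CTL P, F.Mem φ ∧
        (∀ K ∈ Pos, CTLsatK K φ) ∧ (∀ K ∈ Neg, ¬ CTLsatK K φ)) →
    ∃ φ : CTL P, F.Mem φ ∧
        (∀ K ∈ Pos, CTLsatK K φ) ∧ (∀ K ∈ Neg, ¬ CTLsatK K φ) ∧
        CTLsz φ ≤ 2 ^ (∑ K ∈ Pos ∪ Neg, Fintype.card K.Q) := by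
  open CTLAux in
  rintro ⟨φ0, hF0, hPos0, hNeg0⟩
  set S : Finset (AKripke P) := Pos ∪ Neg with hS
  set n : ℕ := ∑ K ∈ S, Fintype.card K.Q with hn
  let V := ∀ K : ↥S, ((K : AKripke P).Q → Prop)
  have hcard : Nat.card V = 2 ^ n := by
    rw [Nat.card_pi]
    have heach : ∀ K : ↥S, Nat.card ((K : AKripke P).Q → Prop)
        = 2 ^ Fintype.card (K : AKripke P).Q := fun K => card_fun_prop _
    rw [Finset.prod_congr rfl fun K _ => heach K, Finset.prod_pow_eq_pow_sum, hn,
      ← Finset.sum_coe_sort S fun K => Fintype.card K.Q]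
  let vec : CTL P → V := fun χ K => CTLsat (K : AKripke P) χ
  have key : ∀ N (φ : CTL P), CTLsz φ ≤ N → F.Mem φ →
      (∀ K ∈ Pos, CTLsatK K φ) → (∀ K ∈ Neg, ¬ CTLsatK K φ) →
      ∃ ψ : CTL P, F.Mem ψ ∧ (∀ K ∈ Pos, CTLsatK K ψ) ∧ (∀ K ∈ Neg, ¬ CTLsatK K ψ)
        ∧ CTLsz ψ ≤ 2 ^ n := by
    intro N
    induction N with
    | zero =>
      intro φ hsz hF hp hn'
      exact ⟨φ, hF, hp, hn', hsz.trans (Nat.zero_le _)⟩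
    | succ N ih =>
      intro φ hsz hF hp hn'
      by_cases hinj : Set.InjOn vec (CTLSub φ)
      · refine ⟨φ, hF, hp, hn', ?_⟩
        have : CTLsz φ = (vec '' CTLSub φ).ncard := (Set.ncard_image_of_injOn hinj).symm
        rw [this, ← hcard, ← Set.ncard_univ V]
        exact Set.ncard_le_ncard (Set.subset_univ _) Set.finite_univ
      · rw [Set.InjOn] at hinj
        push_neg at hinj
        obtain ⟨x, hx, y, hy, hvec, hne⟩ := hinj
        have hanti : ∀ u v : CTL P, u ∈ CTLSub v → v ∈ CTLSub u → u ≠ v → False := by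
          intro u v h1 h2 hne
          rcases mem_sub_size h1 with rfl | h1'
          · exact hne rfl
          rcases mem_sub_size h2 with rfl | h2'
          · exact hne rfl
          omega
        obtain ⟨a, b, ha, hb, hvab, hneab, hbna⟩ :
            ∃ a b : CTL P, a ∈ CTLSub φ ∧ b ∈ CTLSub φ ∧ vec a = vec b ∧ a ≠ b
              ∧ b ∉ CTLSub a := by
          by_cases hc : y ∈ CTLSub x
          · exact ⟨y, x, hy, hx, hvec.symm, fun h => hne h.symm,
              fun h => hanti y x hc h (fun h' => hne h'.symm)⟩
          · exact ⟨x, y, hx, hy, hvec, hne, hc⟩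
        set φ' := subst a b φ with hφ'
        have hsat : ∀ K : ↥S, CTLsat (K : AKripke P) φ' = CTLsat (K : AKripke P) φ :=
          fun K => sat_subst (congrFun hvab K) φ
        have hsatm : ∀ K ∈ S, CTLsat K φ' = CTLsat K φ := fun K hK => hsat ⟨K, hK⟩
        have hp' : ∀ K ∈ Pos, CTLsatK K φ' := by
          intro K hK
          have := hsatm K (Finset.mem_union_left _ hK)
          intro q hq
          rw [this]
          exact hp K hK q hq
        have hn'' : ∀ K ∈ Neg, ¬ CTLsatK K φ' := by
          intro K hK hc
          apply hn' K hK
          have := hsatm K (Finset.mem_union_right _ hK)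
          intro q hq
          rw [← this]
          exact hc q hq
        have hF' : F.Mem φ' := mem_subst (mem_of_sub hF ha) hF
        -- size decreases
        have hfin := sub_finite φ
        have h1 : CTLSub φ' ⊆ subst a b '' CTLSub φ := by
          refine (sub_subst a b φ).trans (Set.union_subset subset_rfl ?_)
          intro σ hσ
          have hσφ : σ ∈ CTLSub φ := sub_trans hσ ha
          have hbσ : b ∉ CTLSub σ := fun h => hbna (sub_trans h hσ)
          exact ⟨σ, hσφ, subst_of_not_mem hbσ⟩
        have h2 : subst a b '' CTLSub φ = subst a b '' (CTLSub φ \ {b}) := by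
          apply Set.Subset.antisymm
          · rintro _ ⟨τ, hτ, rfl⟩
            by_cases hτb : τ = b
            · subst hτb
              refine ⟨a, ⟨ha, hneab⟩, ?_⟩
              rw [subst_of_not_mem hbna, subst_self]
            · exact ⟨τ, ⟨hτ, hτb⟩, rfl⟩
          · exact Set.image_mono Set.diff_subset
        have hlt : CTLsz φ' < CTLsz φ := by
          have c1 : CTLsz φ' ≤ (subst a b '' (CTLSub φ \ {b})).ncard := by
            rw [← h2]
            exact Set.ncard_le_ncard h1 (hfin.image _)
          have c2 : (subst a b '' (CTLSub φ \ {b})).ncard ≤ (CTLSub φ \ {b}).ncard :=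
            Set.ncard_image_le hfin.diff
          have c3 : (CTLSub φ \ {b}).ncard < (CTLSub φ).ncard :=
            Set.ncard_diff_singleton_lt_of_mem hb hfin
          unfold CTLsz at *
          omega
        exact ih φ' (by omega) hF' hp' hn''
  exact key (CTLsz φ0) φ0 le_rfl hF0 hPos0 hNeg0
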